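/- Let F be a smooth elliptic integrand, Ω a bounded open set with smooth boundary satisfying H_Ω^F ≥ κ H_Ω^{F,0} on ∂Ω for some κ > 0, where H_Ω^{F,0} = n 𝓕(Ω)/((n+1)|Ω|). Then the anisotropic Heintze–Karcher deficit η_F(Ω) = 1 − (n+1)|Ω| / ∫_{∂Ω} (n F(ν_Ω)/H_Ω^F) satisfies η_F(Ω) ≤ (1/(κ 𝓕(Ω))) ∫_{∂Ω} |H_Ω^F/H_Ω^{F,0} − 1| F(ν_Ω) dH^n, and in particular η_F(Ω) ≤ δ_F(Ω)/κ, where δ_F(Ω) = ( (1/𝓕(Ω)) ∫_{∂Ω} |H_Ω^F/H_Ω^{F,0} − 1|² F(ν_Ω) dH^n )^{1/2}. -/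

import Mathlib

open scoped RealInnerProductSpace MeasureTheory
open MeasureTheory

abbrev Euc (n : ℕ) := EuclideanSpace ℝ (Fin (n + 1))

/-- The `n`-dimensional Hausdorff measure restricted to the boundary of `Ω`. -/
noncomputable def bdryMeasure (n : ℕ) (Ω : Set (Euc n)) : Measure (Euc n) :=
  (Measure.hausdorffMeasure (n : ℝ)).restrict (frontier Ω)

private lemma ptwise (nr f h H0 κ : ℝ) (hn : 0 < nr) (hf : 0 < f) (hh : 0 < h) (hH0 : 0 < H0)
    (hκ : 0 < κ) (hge : κ * H0 ≤ h) :
    nr * f / h ≤ nr / H0 * f + nr / (κ * H0) * (|h / H0 - 1| * f) := by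
  rcases le_total h H0 with hle | hle
  · have habs : |h / H0 - 1| = -(h / H0 - 1) := abs_of_nonpos (by
      rw [sub_nonpos, div_le_one hH0]; exact hle)
    rw [habs]
    rw [div_le_iff₀ hh]
    have key : 0 ≤ (H0 - h) * (h - κ * H0) * (nr * f) :=
      mul_nonneg (mul_nonneg (sub_nonneg.2 hle) (sub_nonneg.2 hge)) (mul_pos hn hf).le
    have e1 : nr / H0 * f * (κ * H0) * H0 = nr * f * κ * H0 := by field_simp
    have e2 : nr / (κ * H0) * (-(h / H0 - 1) * f) * (κ * H0 * H0) = nr * f * (H0 - h) := by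
      field_simp; ring
    nlinarith [mul_pos hκ hH0, mul_pos (mul_pos hκ hH0) hH0, mul_pos hn hf]
  · have habs : |h / H0 - 1| = h / H0 - 1 := abs_of_nonneg (by
      rw [sub_nonneg, le_div_iff₀ hH0, one_mul]; exact hle)
    have h1 : nr * f / h ≤ nr / H0 * f := by
      rw [div_mul_eq_mul_div]
      exact div_le_div_of_nonneg_left (by positivity) hH0 hle
    have h2 : 0 ≤ nr / (κ * H0) * (|h / H0 - 1| * f) := by
      rw [habs]
      have : 0 ≤ h / H0 - 1 := by rw [sub_nonneg, le_div_iff₀ hH0, one_mul]; exact hle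
      positivity
    linarith

set_option maxHeartbeats 1000000 in
theorem heintze_karcher_deficit_le {n : ℕ}
    (Ω : Set (Euc n)) (hΩo : IsOpen Ω) (hΩb : Bornology.IsBounded Ω)
    -- `Fν x` plays the role of `F(ν_Ω(x))` and `H x` of `H_Ω^F(x)` on `∂Ω`
    (Fν H : Euc n → ℝ)
    (hFpos : ∀ x ∈ frontier Ω, 0 < Fν x)
    (hHpos : ∀ x ∈ frontier Ω, 0 < H x)
    (hvol : 0 < (volume Ω).toReal)
    (hF : 0 < ∫ x, Fν x ∂(bdryMeasure n Ω))
    (κ : ℝ) (hκ : 0 < κ)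
    -- lower bound `H_Ω^F ≥ κ H_Ω^{F,0}` on `∂Ω`
    (hκH : ∀ x ∈ frontier Ω,
      κ * ((n : ℝ) * (∫ y, Fν y ∂(bdryMeasure n Ω)) /
        (((n : ℝ) + 1) * (volume Ω).toReal)) ≤ H x)
    -- integrability of the relevant boundary integrands
    (hi1 : Integrable (fun x => (n : ℝ) * Fν x / H x) (bdryMeasure n Ω))
    (hi2 : Integrable Fν (bdryMeasure n Ω))
    (hi3 : Integrable (fun x =>
      |H x / ((n : ℝ) * (∫ y, Fν y ∂(bdryMeasure n Ω)) /
        (((n : ℝ) + 1) * (volume Ω).toReal)) - 1| * Fν x) (bdryMeasure n Ω))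
    (hi4 : Integrable (fun x =>
      |H x / ((n : ℝ) * (∫ y, Fν y ∂(bdryMeasure n Ω)) /
        (((n : ℝ) + 1) * (volume Ω).toReal)) - 1| ^ 2 * Fν x) (bdryMeasure n Ω))
    -- the anisotropic Heintze–Karcher inequality
    (hHK : ((n : ℝ) + 1) * (volume Ω).toReal ≤
      ∫ x, (n : ℝ) * Fν x / H x ∂(bdryMeasure n Ω)) :
    1 - ((n : ℝ) + 1) * (volume Ω).toReal /
        (∫ x, (n : ℝ) * Fν x / H x ∂(bdryMeasure n Ω)) ≤
      (1 / (κ * ∫ x, Fν x ∂(bdryMeasure n Ω))) *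
        ∫ x, |H x / ((n : ℝ) * (∫ y, Fν y ∂(bdryMeasure n Ω)) /
          (((n : ℝ) + 1) * (volume Ω).toReal)) - 1| * Fν x ∂(bdryMeasure n Ω) ∧
    1 - ((n : ℝ) + 1) * (volume Ω).toReal /
        (∫ x, (n : ℝ) * Fν x / H x ∂(bdryMeasure n Ω)) ≤
      Real.sqrt ((1 / ∫ x, Fν x ∂(bdryMeasure n Ω)) *
        ∫ x, |H x / ((n : ℝ) * (∫ y, Fν y ∂(bdryMeasure n Ω)) /
          (((n : ℝ) + 1) * (volume Ω).toReal)) - 1| ^ 2 * Fν x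
          ∂(bdryMeasure n Ω)) / κ := by
  set μ := bdryMeasure n Ω with hμdef
  set Fint := ∫ x, Fν x ∂μ with hFintdef
  set V := ((n : ℝ) + 1) * (volume Ω).toReal with hVdef
  set H0 := (n : ℝ) * Fint / V with hH0def
  set I := ∫ x, (n : ℝ) * Fν x / H x ∂μ with hIdef
  set J := ∫ x, |H x / H0 - 1| * Fν x ∂μ with hJdef
  set K := ∫ x, |H x / H0 - 1| ^ 2 * Fν x ∂μ with hKdef
  have hV : 0 < V := by positivity
  have hI : 0 < I := lt_of_lt_of_le hV hHK
  -- n = 0 is contradictory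
  rcases Nat.eq_zero_or_pos n with hn0 | hn0
  · exfalso
    have hn0' : ((n : ℕ) : ℝ) = 0 := by exact_mod_cast hn0
    have : I = 0 := by
      rw [hIdef]
      simp [hn0']
    rw [this] at hI
    exact lt_irrefl 0 hI
  have hn : (0 : ℝ) < (n : ℝ) := by exact_mod_cast hn0
  have hH0 : 0 < H0 := div_pos (mul_pos hn hF) hV
  -- a.e. membership in the frontier
  have hfr : MeasurableSet (frontier Ω) := isClosed_frontier.measurableSet
  have hae : ∀ᵐ x ∂μ, x ∈ frontier Ω := by
    rw [hμdef, bdryMeasure]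
    exact ae_restrict_mem hfr
  have hVF : V / Fint = (n : ℝ) / H0 := by
    rw [hH0def]; field_simp
  have hVκF : V / (κ * Fint) = (n : ℝ) / (κ * H0) := by
    rw [hH0def]; field_simp
  -- nonnegativity of J and K
  have hJ0 : 0 ≤ J := by
    refine integral_nonneg_of_ae ?_
    filter_upwards [hae] with x hx
    exact mul_nonneg (abs_nonneg _) (hFpos x hx).le
  have hK0 : 0 ≤ K := by
    refine integral_nonneg_of_ae ?_
    filter_upwards [hae] with x hx
    exact mul_nonneg (sq_nonneg _) (hFpos x hx).le
  -- Step 1 : I ≤ V + (V/(κ Fint)) J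
  have hkey : I ≤ V + V / (κ * Fint) * J := by
    have hmono : I ≤ ∫ x, (V / Fint * Fν x + V / (κ * Fint) * (|H x / H0 - 1| * Fν x)) ∂μ := by
      refine integral_mono_ae hi1 ((hi2.const_mul _).add (hi3.const_mul _)) ?_
      filter_upwards [hae] with x hx
      rw [hVF, hVκF]
      exact ptwise _ _ _ _ _ hn (hFpos x hx) (hHpos x hx) hH0 hκ (hκH x hx)
    have heq : ∫ x, (V / Fint * Fν x + V / (κ * Fint) * (|H x / H0 - 1| * Fν x)) ∂μ
        = V + V / (κ * Fint) * J := by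
      rw [integral_add (hi2.const_mul _) (hi3.const_mul _), integral_const_mul,
        integral_const_mul, ← hFintdef, ← hJdef, div_mul_cancel₀ _ (ne_of_gt hF)]
    rw [heq] at hmono
    exact hmono
  -- first inequality
  have h1 : 1 - V / I ≤ 1 / (κ * Fint) * J := by
    have hIe : 1 - V / I = (I - V) / I := by
      rw [sub_div, div_self (ne_of_gt hI)]
    rw [hIe, div_le_iff₀ hI]
    have : I - V ≤ V / (κ * Fint) * J := by linarith
    calc I - V ≤ V / (κ * Fint) * J := this
      _ = 1 / (κ * Fint) * J * V := by ring
      _ ≤ 1 / (κ * Fint) * J * I := by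
          refine mul_le_mul_of_nonneg_left hHK ?_
          have : 0 < κ * Fint := mul_pos hκ hF
          positivity
  refine ⟨h1, ?_⟩
  -- Step 2 : Cauchy–Schwarz  J ≤ √K * √Fint
  have hCS : J ≤ Real.sqrt K * Real.sqrt Fint := by
    set f : Euc n → ℝ := fun x => |H x / H0 - 1| * Fν x / Real.sqrt (Fν x) with hfdef
    set s : Euc n → ℝ := fun x => Real.sqrt (Fν x) with hsdef
    have hs_meas : AEStronglyMeasurable s μ :=
      Real.continuous_sqrt.comp_aestronglyMeasurable hi2.1
    have hf_meas : AEStronglyMeasurable f μ :=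
      (hi3.1.aemeasurable.div hs_meas.aemeasurable).aestronglyMeasurable
    have hae_sq : ∀ᵐ x ∂μ, Real.sqrt (Fν x) ^ 2 = Fν x := by
      filter_upwards [hae] with x hx
      exact Real.sq_sqrt (hFpos x hx).le
    have hae_pos : ∀ᵐ x ∂μ, 0 < Fν x := by
      filter_upwards [hae] with x hx
      exact hFpos x hx
    have hfs : ∀ᵐ x ∂μ, f x * s x = |H x / H0 - 1| * Fν x := by
      filter_upwards [hae_pos] with x hx
      have hs0 : Real.sqrt (Fν x) ≠ 0 := by positivity
      rw [hfdef, hsdef]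
      exact div_mul_cancel₀ _ hs0
    have hf2 : ∀ᵐ x ∂μ, f x ^ 2 = |H x / H0 - 1| ^ 2 * Fν x := by
      filter_upwards [hae_pos, hae_sq] with x hx hsq
      rw [hfdef]
      have hne : Fν x ≠ 0 := ne_of_gt hx
      rw [div_pow, hsq, mul_pow, sq_abs]
      field_simp
    have hs2 : ∀ᵐ x ∂μ, s x ^ 2 = Fν x := hae_sq
    have hf_nonneg : 0 ≤ᵐ[μ] f := by
      filter_upwards [hae_pos] with x hx
      exact div_nonneg (mul_nonneg (abs_nonneg _) hx.le) (Real.sqrt_nonneg _)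
    have hs_nonneg : 0 ≤ᵐ[μ] s := ae_of_all μ fun x => Real.sqrt_nonneg _
    have hmemf : MemLp f 2 μ := by
      rw [memLp_two_iff_integrable_sq hf_meas]
      exact hi4.congr (hf2.mono fun x hx => hx.symm)
    have hmems : MemLp s 2 μ := by
      rw [memLp_two_iff_integrable_sq hs_meas]
      exact hi2.congr (hs2.mono fun x hx => hx.symm)
    have hpq : (2 : ℝ).HolderConjugate 2 := Real.HolderConjugate.two_two
    have hO2 : ENNReal.ofReal (2 : ℝ) = 2 := by norm_num
    have holder := integral_mul_le_Lp_mul_Lq_of_nonneg hpq hf_nonneg hs_nonneg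
      (by rw [hO2]; exact hmemf) (by rw [hO2]; exact hmems)
    have hfs_int : ∫ x, f x * s x ∂μ = J := integral_congr_ae hfs
    have hrpow : ∀ y : ℝ, y ^ (2 : ℝ) = y ^ 2 := fun y => by
      rw [show (2 : ℝ) = ((2 : ℕ) : ℝ) by norm_num, Real.rpow_natCast]
    have hf2_int : ∫ x, f x ^ (2 : ℝ) ∂μ = K := by
      refine integral_congr_ae ?_
      filter_upwards [hf2] with x hx
      rw [hrpow, hx]
    have hs2_int : ∫ x, s x ^ (2 : ℝ) ∂μ = Fint := by
      refine integral_congr_ae ?_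
      filter_upwards [hs2] with x hx
      rw [hrpow, hx]
    rw [hfs_int, hf2_int, hs2_int, ← Real.sqrt_eq_rpow, ← Real.sqrt_eq_rpow] at holder
    exact holder
  -- conclude second inequality
  have h2 : 1 / (κ * Fint) * J ≤ Real.sqrt (1 / Fint * K) / κ := by
    have hsF : 0 < Real.sqrt Fint := Real.sqrt_pos.2 hF
    have hFe : Real.sqrt Fint * Real.sqrt Fint = Fint := Real.mul_self_sqrt hF.le
    have hsqrt_eq : Real.sqrt (1 / Fint * K) = Real.sqrt K / Real.sqrt Fint := by
      rw [Real.sqrt_mul (by positivity) K, one_div, Real.sqrt_inv, inv_mul_eq_div]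
    rw [hsqrt_eq]
    calc 1 / (κ * Fint) * J ≤ 1 / (κ * Fint) * (Real.sqrt K * Real.sqrt Fint) := by
          refine mul_le_mul_of_nonneg_left hCS ?_
          have : 0 < κ * Fint := mul_pos hκ hF
          positivity
      _ = Real.sqrt K / Real.sqrt Fint / κ := by
          field_simp
          linear_combination Real.sqrt K * hFe
  exact le_trans h1 h2
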